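/- Let E_0, A_1, B_1, E_1, A_2, B_2, E_2 be finite nonempty index types with |A_1| = |B_1| and |A_2| = |B_2|. Let R be a PSD matrix indexed by E_0 × A_1 × B_1 × E_1 such that for every bistochastic channel Choi operator C_1 indexed by A_1 × B_1, the link product R * C_1 is PSD and satisfies Tr_{E_1}[R * C_1] = 1_{E_0} (R is a bistochastic supermap from E_0 to E_1). Let S be a PSD matrix indexed by E_1 × A_2 × B_2 × E_2 such that for every bistochastic channel Choi operator C_2 indexed by A_2 × B_2, the link product S * C_2 is PSD and satisfies Tr_{E_2}[S * C_2] = 1_{E_1}. Define W indexed by E_0 × A_1 × B_1 × A_2 × B_2 × E_2 by W((e_0,a_1,b_1,a_2,b_2,e_2),(e_0',a_1',b_1',a_2',b_2',e_2')) = Σ_{e,e'} R((e_0,a_1,b_1,e),(e_0',a_1',b_1',e')) · S((e,a_2,b_2,e_2),(e',a_2',b_2',e_2')). Then W is PSD and for every pair of bistochastic channel Choi operators C_1 (indexed by A_1 × B_1) and C_2 (indexed by A_2 × B_2), the matrix V indexed by E_0 × E_2 with entries V((e_0,e_2),(e_0',e_2')) = Σ W((e_0,a_1,b_1,a_2,b_2,e_2),(e_0',a_1',b_1',a_2',b_2',e_2'))·C_1((a_1,b_1),(a_1',b_1'))·C_2((a_2,b_2),(a_2',b_2'))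 (sum over all primed and unprimed a,b indices) is PSD and satisfies Tr_{E_2}[V] = 1_{E_0}; that is, the sequential composition of two bistochastic supermaps maps every pair of bistochastic channels to a quantum channel from E_0 to E_2. -/

import Mathlib

open Matrix ComplexOrder

/-- The link product `R * C` of a matrix `R` on `P × A × B × F` with a matrix `C` on `A × B`. -/
noncomputable def linkPABF {P A B F : Type*} [Fintype A] [Fintype B]
    (R : Matrix (P × A × B × F) (P × A × B × F) ℂ) (C : Matrix (A × B) (A × B) ℂ) :
    Matrix (P × F) (P × F) ℂ :=
  Matrix.of fun (u u' : P × F) =>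
    ∑ a : A, ∑ b : B, ∑ a' : A, ∑ b' : B,
      R (u.1, a, b, u.2) (u'.1, a', b', u'.2) * C (a, b) (a', b')

/-- The sequential composition (over the shared system `E1`) of a supermap `R` on
`E0 × A1 × B1 × E1` with a supermap `S` on `E1 × A2 × B2 × E2`. -/
noncomputable def seqComp {E0 A1 B1 E1 A2 B2 E2 : Type*} [Fintype E1]
    (R : Matrix (E0 × A1 × B1 × E1) (E0 × A1 × B1 × E1) ℂ)
    (S : Matrix (E1 × A2 × B2 × E2) (E1 × A2 × B2 × E2) ℂ) :
    Matrix (E0 × A1 × B1 × A2 × B2 × E2) (E0 × A1 × B1 × A2 × B2 × E2) ℂ :=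
  Matrix.of fun u u' =>
    ∑ e : E1, ∑ e' : E1,
      R (u.1, u.2.1, u.2.2.1, e) (u'.1, u'.2.1, u'.2.2.1, e') *
        S (e, u.2.2.2.1, u.2.2.2.2.1, u.2.2.2.2.2)
          (e', u'.2.2.2.1, u'.2.2.2.2.1, u'.2.2.2.2.2)

/-- Plugging two channels `C1`, `C2` into a bipartite supermap `W` on
`E0 × A1 × B1 × A2 × B2 × E2`. -/
noncomputable def link2PF {E0 A1 B1 A2 B2 E2 : Type*}
    [Fintype A1] [Fintype B1] [Fintype A2] [Fintype B2]
    (W : Matrix (E0 × A1 × B1 × A2 × B2 × E2) (E0 × A1 × B1 × A2 × B2 × E2) ℂ)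
    (C1 : Matrix (A1 × B1) (A1 × B1) ℂ) (C2 : Matrix (A2 × B2) (A2 × B2) ℂ) :
    Matrix (E0 × E2) (E0 × E2) ℂ :=
  Matrix.of fun (u u' : E0 × E2) =>
    ∑ a1 : A1, ∑ b1 : B1, ∑ a2 : A2, ∑ b2 : B2,
    ∑ a1' : A1, ∑ b1' : B1, ∑ a2' : A2, ∑ b2' : B2,
      W (u.1, a1, b1, a2, b2, u.2) (u'.1, a1', b1', a2', b2', u'.2) *
        C1 (a1, b1) (a1', b1') * C2 (a2, b2) (a2', b2')

/-! ### Auxiliary definitions and lemmas -/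

/-- Link of two matrices over the shared middle system `J`. -/
noncomputable def linkE1 {I J K : Type*} [Fintype J]
    (M : Matrix (I × J) (I × J) ℂ) (N : Matrix (J × K) (J × K) ℂ) :
    Matrix (I × K) (I × K) ℂ :=
  Matrix.of fun u u' => ∑ e : J, ∑ e' : J, M (u.1, e) (u'.1, e') * N (e, u.2) (e', u'.2)

lemma sum_swap4 {α β γ δ M : Type*} [Fintype α] [Fintype β] [Fintype γ] [Fintype δ]
    [AddCommMonoid M] (f : α → β → γ → δ → M) :
    ∑ a, ∑ b, ∑ c, ∑ d, f a b c d = ∑ c, ∑ d, ∑ a, ∑ b, f a b c d :=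
  calc ∑ a, ∑ b, ∑ c, ∑ d, f a b c d
      = ∑ a, ∑ c, ∑ b, ∑ d, f a b c d :=
        Finset.sum_congr rfl fun _ _ => Finset.sum_comm
    _ = ∑ c, ∑ a, ∑ b, ∑ d, f a b c d := Finset.sum_comm
    _ = ∑ c, ∑ a, ∑ d, ∑ b, f a b c d :=
        Finset.sum_congr rfl fun _ _ => Finset.sum_congr rfl fun _ _ => Finset.sum_comm
    _ = ∑ c, ∑ d, ∑ a, ∑ b, f a b c d :=
        Finset.sum_congr rfl fun _ _ => Finset.sum_comm

lemma sum_swap6 {α β γ δ ε ζ M : Type*} [Fintype α] [Fintype β] [Fintype γ] [Fintype δ]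
    [Fintype ε] [Fintype ζ] [AddCommMonoid M] (f : α → β → γ → δ → ε → ζ → M) :
    ∑ a, ∑ b, ∑ c, ∑ d, ∑ e, ∑ g, f a b c d e g
      = ∑ e, ∑ g, ∑ a, ∑ b, ∑ c, ∑ d, f a b c d e g :=
  calc ∑ a, ∑ b, ∑ c, ∑ d, ∑ e, ∑ g, f a b c d e g
      = ∑ a, ∑ b, ∑ e, ∑ g, ∑ c, ∑ d, f a b c d e g :=
        Finset.sum_congr rfl fun _ _ => Finset.sum_congr rfl fun _ _ => sum_swap4 _
    _ = ∑ e, ∑ g, ∑ a, ∑ b, ∑ c, ∑ d, f a b c d e g := sum_swap4 _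

/-- The key combinatorial rearrangement. -/
lemma core_sum {P Q E : Type*} [Fintype P] [Fintype Q] [Fintype E]
    (F : P → P → E → E → ℂ) (G : Q → Q → E → E → ℂ) :
    ∑ p, ∑ q, ∑ p', ∑ q', ∑ e, ∑ e', F p p' e e' * G q q' e e'
      = ∑ e, ∑ e', (∑ p, ∑ p', F p p' e e') * (∑ q, ∑ q', G q q' e e') :=
  calc ∑ p, ∑ q, ∑ p', ∑ q', ∑ e, ∑ e', F p p' e e' * G q q' e e'
      = ∑ p, ∑ p', ∑ q, ∑ q', ∑ e, ∑ e', F p p' e e' * G q q' e e' :=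
        Finset.sum_congr rfl fun _ _ => Finset.sum_comm
    _ = ∑ e, ∑ e', ∑ p, ∑ p', ∑ q, ∑ q', F p p' e e' * G q q' e e' := sum_swap6 _
    _ = ∑ e, ∑ e', ∑ q, ∑ q', ∑ p, ∑ p', F p p' e e' * G q q' e e' :=
        Finset.sum_congr rfl fun _ _ => Finset.sum_congr rfl fun _ _ => sum_swap4 _
    _ = ∑ e, ∑ e', (∑ p, ∑ p', F p p' e e') * (∑ q, ∑ q', G q q' e e') := by
        simp only [Finset.sum_mul, Finset.mul_sum]

/-- The link over a shared system of two PSD matrices is PSD. -/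
lemma linkE1_posSemidef {I J K : Type*} [Fintype I] [Fintype J] [Fintype K]
    {M : Matrix (I × J) (I × J) ℂ} {N : Matrix (J × K) (J × K) ℂ}
    (hM : M.PosSemidef) (hN : N.PosSemidef) : (linkE1 M N).PosSemidef := by
  obtain ⟨P, hP⟩ : ∃ P : Matrix (_ × _) (_ × _) ℂ, M = Pᴴ * P := by
    classical
    open scoped MatrixOrder in
    exact CStarAlgebra.nonneg_iff_eq_star_mul_self.mp hM.nonneg
  obtain ⟨Q, hQ⟩ : ∃ Q : Matrix (_ × _) (_ × _) ℂ, N = Qᴴ * Q := by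
    classical
    open scoped MatrixOrder in
    exact CStarAlgebra.nonneg_iff_eq_star_mul_self.mp hN.nonneg
  have hM' : ∀ v w, M v w = ∑ k : I × J, star (P k v) * P k w := by
    intro v w; rw [hP]; simp [Matrix.mul_apply]
  have hN' : ∀ v w, N v w = ∑ l : J × K, star (Q l v) * Q l w := by
    intro v w; rw [hQ]; simp [Matrix.mul_apply]
  have hkey : linkE1 M N =
      (Matrix.of fun (kl : (I × J) × (J × K)) (u : I × K) =>
        ∑ e : J, P kl.1 (u.1, e) * Q kl.2 (e, u.2))ᴴ *
      (Matrix.of fun (kl : (I × J) × (J × K)) (u : I × K) =>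
        ∑ e : J, P kl.1 (u.1, e) * Q kl.2 (e, u.2)) := by
    ext u u'
    show (∑ e : J, ∑ e' : J, M (u.1, e) (u'.1, e') * N (e, u.2) (e', u'.2)) = _
    rw [Matrix.mul_apply, Fintype.sum_prod_type]
    simp only [Matrix.conjTranspose_apply, Matrix.of_apply, hM', hN', star_sum, star_mul',
      Finset.sum_mul, Finset.mul_sum]
    rw [sum_swap4 (f := fun (e e' : J) (l : J × K) (k : I × J) =>
      star (P k (u.1, e)) * P k (u'.1, e') * (star (Q l (e, u.2)) * Q l (e', u'.2))),
      Finset.sum_comm]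
    apply Finset.sum_congr rfl; intro k _
    apply Finset.sum_congr rfl; intro l _
    conv_rhs => rw [Finset.sum_comm]
    apply Finset.sum_congr rfl; intro e _
    apply Finset.sum_congr rfl; intro e' _
    ring
  rw [hkey]
  exact Matrix.posSemidef_conjTranspose_mul_self _

/-- `seqComp` as a reindexed `linkE1`. -/
lemma seqComp_eq_linkE1 {E0 A1 B1 E1 A2 B2 E2 : Type*} [Fintype E1]
    (R : Matrix (E0 × A1 × B1 × E1) (E0 × A1 × B1 × E1) ℂ)
    (S : Matrix (E1 × A2 × B2 × E2) (E1 × A2 × B2 × E2) ℂ) :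
    seqComp R S =
      (linkE1 (R.submatrix (fun p : (E0 × A1 × B1) × E1 => (p.1.1, p.1.2.1, p.1.2.2, p.2))
          (fun p : (E0 × A1 × B1) × E1 => (p.1.1, p.1.2.1, p.1.2.2, p.2))) S).submatrix
        (fun u : E0 × A1 × B1 × A2 × B2 × E2 => ((u.1, u.2.1, u.2.2.1), u.2.2.2))
        (fun u => ((u.1, u.2.1, u.2.2.1), u.2.2.2)) := rfl

/-- The main structural identity: plugging channels into a sequential composition is the
link over `E1` of the two partially applied supermaps. -/
lemma link2PF_seqComp {E0 A1 B1 E1 A2 B2 E2 : Type*}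
    [Fintype A1] [Fintype B1] [Fintype E1] [Fintype A2] [Fintype B2]
    (R : Matrix (E0 × A1 × B1 × E1) (E0 × A1 × B1 × E1) ℂ)
    (S : Matrix (E1 × A2 × B2 × E2) (E1 × A2 × B2 × E2) ℂ)
    (C1 : Matrix (A1 × B1) (A1 × B1) ℂ) (C2 : Matrix (A2 × B2) (A2 × B2) ℂ) :
    link2PF (seqComp R S) C1 C2 = linkE1 (linkPABF R C1) (linkPABF S C2) := by
  ext u u'
  have grp2 : link2PF (seqComp R S) C1 C2 u u'
      = ∑ p : A1 × B1, ∑ q : A2 × B2, ∑ p' : A1 × B1, ∑ q' : A2 × B2,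
          seqComp R S (u.1, p.1, p.2, q.1, q.2, u.2) (u'.1, p'.1, p'.2, q'.1, q'.2, u'.2)
            * C1 p p' * C2 q q' := by
    simp only [link2PF, Matrix.of_apply, Fintype.sum_prod_type]
  have grpR : ∀ (v w : E0 × E1), linkPABF R C1 v w
      = ∑ p : A1 × B1, ∑ p' : A1 × B1,
          R (v.1, p.1, p.2, v.2) (w.1, p'.1, p'.2, w.2) * C1 p p' := by
    intro v w; simp only [linkPABF, Matrix.of_apply, Fintype.sum_prod_type]
  have grpS : ∀ (v w : E1 × E2), linkPABF S C2 v w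
      = ∑ q : A2 × B2, ∑ q' : A2 × B2,
          S (v.1, q.1, q.2, v.2) (w.1, q'.1, q'.2, w.2) * C2 q q' := by
    intro v w; simp only [linkPABF, Matrix.of_apply, Fintype.sum_prod_type]
  have step1 : ∀ (p : A1 × B1) (q : A2 × B2) (p' : A1 × B1) (q' : A2 × B2),
      seqComp R S (u.1, p.1, p.2, q.1, q.2, u.2) (u'.1, p'.1, p'.2, q'.1, q'.2, u'.2)
          * C1 p p' * C2 q q'
        = ∑ e : E1, ∑ e' : E1,
            (R (u.1, p.1, p.2, e) (u'.1, p'.1, p'.2, e') * C1 p p') *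
              (S (e, q.1, q.2, u.2) (e', q'.1, q'.2, u'.2) * C2 q q') := by
    intro p q p' q'
    simp only [seqComp, Matrix.of_apply, Finset.sum_mul]
    exact Finset.sum_congr rfl fun _ _ => Finset.sum_congr rfl fun _ _ => by ring
  rw [grp2]
  simp only [step1]
  rw [core_sum (F := fun (p p' : A1 × B1) (e e' : E1) =>
        R (u.1, p.1, p.2, e) (u'.1, p'.1, p'.2, e') * C1 p p')
      (G := fun (q q' : A2 × B2) (e e' : E1) =>
        S (e, q.1, q.2, u.2) (e', q'.1, q'.2, u'.2) * C2 q q')]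
  show _ = ∑ e : E1, ∑ e' : E1,
      linkPABF R C1 (u.1, e) (u'.1, e') * linkPABF S C2 (e, u.2) (e', u'.2)
  simp only [grpR, grpS]

theorem stmt15 {E0 A1 B1 E1 A2 B2 E2 : Type*}
    [Fintype E0] [Fintype A1] [Fintype B1] [Fintype E1] [Fintype A2] [Fintype B2]
    [Fintype E2]
    [DecidableEq E0] [DecidableEq A1] [DecidableEq B1] [DecidableEq E1]
    [DecidableEq A2] [DecidableEq B2] [DecidableEq E2]
    [Nonempty E0] [Nonempty A1] [Nonempty B1] [Nonempty E1] [Nonempty A2] [Nonempty B2]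
    [Nonempty E2]
    (hAB1 : Fintype.card A1 = Fintype.card B1)
    (hAB2 : Fintype.card A2 = Fintype.card B2)
    (R : Matrix (E0 × A1 × B1 × E1) (E0 × A1 × B1 × E1) ℂ) (hRpsd : R.PosSemidef)
    (S : Matrix (E1 × A2 × B2 × E2) (E1 × A2 × B2 × E2) ℂ) (hSpsd : S.PosSemidef)
    (hR : ∀ C1 : Matrix (A1 × B1) (A1 × B1) ℂ, C1.PosSemidef →
      (∀ a a', (∑ b : B1, C1 (a, b) (a', b)) = if a = a' then 1 else 0) →
      (∀ b b', (∑ a : A1, C1 (a, b) (a, b')) = if b = b' then 1 else 0) →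
      (linkPABF R C1).PosSemidef ∧
      (∀ e e' : E0, (∑ f : E1, linkPABF R C1 (e, f) (e', f)) = if e = e' then 1 else 0))
    (hS : ∀ C2 : Matrix (A2 × B2) (A2 × B2) ℂ, C2.PosSemidef →
      (∀ a a', (∑ b : B2, C2 (a, b) (a', b)) = if a = a' then 1 else 0) →
      (∀ b b', (∑ a : A2, C2 (a, b) (a, b')) = if b = b' then 1 else 0) →
      (linkPABF S C2).PosSemidef ∧
      (∀ e e' : E1, (∑ f : E2, linkPABF S C2 (e, f) (e', f)) = if e = e' then 1 else 0)) :
    (seqComp R S).PosSemidef ∧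
    (∀ (C1 : Matrix (A1 × B1) (A1 × B1) ℂ) (C2 : Matrix (A2 × B2) (A2 × B2) ℂ),
      C1.PosSemidef →
      (∀ a a', (∑ b : B1, C1 (a, b) (a', b)) = if a = a' then 1 else 0) →
      (∀ b b', (∑ a : A1, C1 (a, b) (a, b')) = if b = b' then 1 else 0) →
      C2.PosSemidef →
      (∀ a a', (∑ b : B2, C2 (a, b) (a', b)) = if a = a' then 1 else 0) →
      (∀ b b', (∑ a : A2, C2 (a, b) (a, b')) = if b = b' then 1 else 0) →
      (link2PF (seqComp R S) C1 C2).PosSemidef ∧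
      (∀ e e' : E0,
        (∑ f : E2, link2PF (seqComp R S) C1 C2 (e, f) (e', f)) =
          if e = e' then 1 else 0)) := by
  constructor
  · rw [seqComp_eq_linkE1]
    exact (linkE1_posSemidef (hRpsd.submatrix _) hSpsd).submatrix _
  · intro C1 C2 h1psd h1a h1b h2psd h2a h2b
    obtain ⟨hMpsd, hMtr⟩ := hR C1 h1psd h1a h1b
    obtain ⟨hNpsd, hNtr⟩ := hS C2 h2psd h2a h2b
    rw [link2PF_seqComp]
    refine ⟨linkE1_posSemidef hMpsd hNpsd, ?_⟩
    intro e e'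
    calc ∑ f : E2, linkE1 (linkPABF R C1) (linkPABF S C2) (e, f) (e', f)
        = ∑ f : E2, ∑ e1 : E1, ∑ e1' : E1,
            linkPABF R C1 (e, e1) (e', e1') * linkPABF S C2 (e1, f) (e1', f) := rfl
      _ = ∑ e1 : E1, ∑ e1' : E1, ∑ f : E2,
            linkPABF R C1 (e, e1) (e', e1') * linkPABF S C2 (e1, f) (e1', f) := by
          rw [Finset.sum_comm]
          exact Finset.sum_congr rfl fun _ _ => Finset.sum_comm
      _ = ∑ e1 : E1, ∑ e1' : E1,
            linkPABF R C1 (e, e1) (e', e1') * ∑ f : E2, linkPABF S C2 (e1, f) (e1', f) := by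
          simp only [Finset.mul_sum]
      _ = ∑ e1 : E1, ∑ e1' : E1,
            linkPABF R C1 (e, e1) (e', e1') * (if e1 = e1' then 1 else 0) := by
          simp only [hNtr]
      _ = ∑ e1 : E1, linkPABF R C1 (e, e1) (e', e1) := by
          simp [mul_ite, mul_one, mul_zero, Finset.sum_ite_eq]
      _ = if e = e' then 1 else 0 := hMtr e e'
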